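/- Let U ⊆ ℝⁿ be open, u ∈ Lip_loc(U), and k ≥ 0. Then the following are equivalent: (i) H(Du(x)) ≤ k for almost every x ∈ U; (ii) u(x) − u(y) ≤ C_k(x − y) whenever the segment [x, y] is contained in U. -/

import Mathlib

open Set Metric MeasureTheory Filter Bornology
open scoped RealInnerProductSpace

noncomputable section

abbrev Euc (n : ℕ) := EuclideanSpace ℝ (Fin n)

variable {n : ℕ}

/-- The Lagrangian of `H`, an extended real number. -/
def Lag (H : Euc n → ℝ) (q : Euc n) : EReal :=
  ⨆ p : Euc n, ((⟪p, q⟫ - H p : ℝ) : EReal)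

/-- `T^t u (x)`, with supremum taken over `y ∈ S`. Points `y` where the Lagrangian term
is `+∞` contribute nothing, since no real number equals `-∞`. -/
def TupOn (H : Euc n → ℝ) (S : Set (Euc n)) (u : Euc n → ℝ) (t : ℝ) (x : Euc n) : ℝ :=
  if t = 0 then u x
  else sSup {r : ℝ | ∃ y ∈ S, (r : EReal) = (u y : EReal) - (t : EReal) * Lag H (t⁻¹ • (y - x))}

/-- `T_t u (x)`, with infimum taken over `y ∈ S`. -/
def TdnOn (H : Euc n → ℝ) (S : Set (Euc n)) (u : Euc n → ℝ) (t : ℝ) (x : Euc n) : ℝ :=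
  if t = 0 then u x
  else sInf {r : ℝ | ∃ y ∈ S, (r : EReal) = (u y : EReal) + (t : EReal) * Lag H (t⁻¹ • (x - y))}

/-- `S⁺ u (x) = limsup_{t ↓ 0} (T^t u(x) - u(x))/t`. -/
def Splus (H : Euc n → ℝ) (U : Set (Euc n)) (u : Euc n → ℝ) (x : Euc n) : ℝ :=
  limsup (fun t => (TupOn H U u t x - u x) / t) (nhdsWithin 0 (Ioi 0))

/-- The oscillation `osc_U u = sup_U u - inf_U u`. -/
def oscOn (u : Euc n → ℝ) (U : Set (Euc n)) : ℝ := sSup (u '' U) - sInf (u '' U)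

/-- `U_r = {x ∈ U : dist(x, ∂U) > r}`. -/
def inUr (U : Set (Euc n)) (r : ℝ) : Set (Euc n) := {x ∈ U | r < infDist x (frontier U)}

/-- The cone function `C_k(x) = max {p·x : H(p) = k}`. -/
def coneFn (H : Euc n → ℝ) (k : ℝ) (x : Euc n) : ℝ :=
  sSup {r : ℝ | ∃ p, H p = k ∧ r = ⟪p, x⟫}

/-- The subdifferential of `H` at `p`. -/
def subdiff (H : Euc n → ℝ) (p : Euc n) : Set (Euc n) :=
  {q | ∀ p', H p + ⟪q, p' - p⟫ ≤ H p'}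

/-- `Γ_k`: subgradients of `H` at points of the level set `H⁻¹(k)`. -/
def GammaSet (H : Euc n → ℝ) (k : ℝ) : Set (Euc n) :=
  {q | ∃ p, H p = k ∧ q ∈ subdiff H p}

/-- `W_k`: subgradients of `H` at points of the sublevel set `H⁻¹([0,k])`. -/
def WSet (H : Euc n → ℝ) (k : ℝ) : Set (Euc n) :=
  {q | ∃ p, 0 ≤ H p ∧ H p ≤ k ∧ q ∈ subdiff H p}

/-- `u ∈ Lip_loc(U)`: `u` is locally Lipschitz on `U`. -/
def LocLipOn (u : Euc n → ℝ) (U : Set (Euc n)) : Prop :=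
  ∀ x ∈ U, ∃ K : NNReal, ∃ s ∈ nhdsWithin x U, LipschitzOnWith K u s

/-- `ess sup_V H(Dv)`, defined to be `+∞` if `v` is not locally Lipschitz in `V`.
Here `Dv` is the a.e.-defined gradient (Rademacher). -/
def essSupH (H : Euc n → ℝ) (V : Set (Euc n)) (v : Euc n → ℝ) : EReal :=
  haveI := Classical.propDecidable (LocLipOn v V)
  if LocLipOn v V then
    essSup (fun x => ((H (gradient v x) : ℝ) : EReal)) (volume.restrict V)
  else ⊤

/-- `u` is absolutely subminimizing for `H` in `U`. -/
def AbsSubmin (H : Euc n → ℝ) (U : Set (Euc n)) (u : Euc n → ℝ) : Prop :=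
  LocLipOn u U ∧
  ∀ V : Set (Euc n), IsOpen V → IsCompact (closure V) → closure V ⊆ U →
    ∀ v : Euc n → ℝ, LocLipOn v V → ContinuousOn v (closure V) →
      EqOn v u (frontier V) → (∀ x ∈ V, v x ≤ u x) →
        essSupH H V u ≤ essSupH H V v

/-- `u` is absolutely superminimizing for `H` in `U`. -/
def AbsSupermin (H : Euc n → ℝ) (U : Set (Euc n)) (u : Euc n → ℝ) : Prop :=
  LocLipOn u U ∧
  ∀ V : Set (Euc n), IsOpen V → IsCompact (closure V) → closure V ⊆ U →
    ∀ v : Euc n → ℝ, LocLipOn v V → ContinuousOn v (closure V) →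
      EqOn v u (frontier V) → (∀ x ∈ V, u x ≤ v x) →
        essSupH H V u ≤ essSupH H V v

/-- `u` satisfies comparisons with cones from above in `U`. -/
def CmpConesAbove (H : Euc n → ℝ) (U : Set (Euc n)) (u : Euc n → ℝ) : Prop :=
  ∀ k : ℝ, 0 ≤ k → ∀ V : Set (Euc n), IsOpen V → IsCompact (closure V) → closure V ⊆ U →
    ∀ x₀, x₀ ∉ V →
      sSup ((fun x => u x - coneFn H k (x - x₀)) '' closure V) =
      sSup ((fun x => u x - coneFn H k (x - x₀)) '' frontier V)

/-- `u` satisfies the convexity criterion in `U`. -/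
def ConvexityCriterion (H : Euc n → ℝ) (U : Set (Euc n)) (u : Euc n → ℝ) : Prop :=
  ∀ V : Set (Euc n), IsOpen V → IsCompact (closure V) → closure V ⊆ U →
    ∃ δ > (0:ℝ), ∀ x ∈ V, ConvexOn ℝ (Icc 0 δ) (fun t => TupOn H U u t x)

/-- `u` satisfies the pointwise convexity criterion in `U`. -/
def PtwiseCC (H : Euc n → ℝ) (U : Set (Euc n)) (u : Euc n → ℝ) : Prop :=
  UpperSemicontinuousOn (Splus H U u) U ∧
  ∀ x ∈ U, ∃ δ > (0:ℝ), ConvexOn ℝ (Icc 0 δ) (fun t => TupOn H U u t x)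

end


open scoped Topology ENNReal

section Aux

variable {n : ℕ} {H : Euc n → ℝ}

lemma H_cont (hHconv : ConvexOn ℝ Set.univ H) : Continuous H := by
  rw [← continuousOn_univ]
  exact hHconv.continuousOn isOpen_univ

lemma H_coercive (hn : 1 ≤ n) (hHconv : ConvexOn ℝ Set.univ H) (hH0 : H 0 = 0)
    (hHnonneg : ∀ p, 0 ≤ H p) (hHzb : Bornology.IsBounded {p : Euc n | H p = 0}) :
    ∃ r > (0:ℝ), ∃ m > (0:ℝ), ∀ p : Euc n, r ≤ ‖p‖ → m * (‖p‖ / r) ≤ H p := by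
  haveI : Nonempty (Fin n) := ⟨⟨0, hn⟩⟩
  obtain ⟨r₀, hr₀⟩ := hHzb.subset_closedBall 0
  set r := max r₀ 0 + 1 with hrdef
  have hr : 0 < r := by positivity
  have hsub : {p : Euc n | H p = 0} ⊆ closedBall 0 (max r₀ 0) :=
    hr₀.trans (closedBall_subset_closedBall (le_max_left _ _))
  have hsphne : (sphere (0 : Euc n) r).Nonempty :=
    NormedSpace.sphere_nonempty.2 hr.le
  obtain ⟨p₀, hp₀mem, hp₀min⟩ :=
    (isCompact_sphere (0 : Euc n) r).exists_isMinOn hsphne ((H_cont hHconv).continuousOn)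
  set m := H p₀ with hm
  have hmpos : 0 < m := by
    rcases lt_or_eq_of_le (hHnonneg p₀) with h | h
    · exact h
    · exfalso
      have : p₀ ∈ closedBall (0 : Euc n) (max r₀ 0) := hsub h.symm
      rw [mem_closedBall, dist_zero_right] at this
      rw [mem_sphere_zero_iff_norm] at hp₀mem
      linarith [hp₀mem ▸ this, le_max_right r₀ 0]
  refine ⟨r, hr, m, hmpos, fun p hp => ?_⟩
  have hpnorm : 0 < ‖p‖ := lt_of_lt_of_le hr hp
  set t := r / ‖p‖ with ht
  have ht0 : 0 < t := by positivity
  have ht1 : t ≤ 1 := by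
    rw [ht, div_le_one hpnorm]; exact hp
  have htp : t • p ∈ sphere (0 : Euc n) r := by
    rw [mem_sphere_zero_iff_norm, norm_smul, Real.norm_eq_abs, abs_of_pos ht0, ht]
    field_simp
  have hconv := hHconv.2 (mem_univ p) (mem_univ (0 : Euc n)) ht0.le (by linarith : (0:ℝ) ≤ 1 - t)
    (by ring)
  simp only [smul_zero, add_zero, hH0, mul_zero] at hconv
  have h1 : m ≤ H (t • p) := hp₀min htp
  have h2 : H (t • p) ≤ t * H p := by simpa using hconv
  have : m ≤ t * H p := h1.trans h2
  rw [ht] at this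
  rw [div_eq_mul_inv, ← mul_assoc]
  calc m * ‖p‖ * r⁻¹ ≤ (r / ‖p‖ * H p) * ‖p‖ * r⁻¹ := by
        have hHp : 0 ≤ H p := hHnonneg p
        gcongr
      _ = H p := by field_simp

lemma H_sublevel_bounded (hn : 1 ≤ n) (hHconv : ConvexOn ℝ Set.univ H) (hH0 : H 0 = 0)
    (hHnonneg : ∀ p, 0 ≤ H p) (hHzb : Bornology.IsBounded {p : Euc n | H p = 0}) (k : ℝ) :
    ∃ R > (0:ℝ), ∀ p : Euc n, H p ≤ k → ‖p‖ ≤ R := by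
  obtain ⟨r, hr, m, hm, hco⟩ := H_coercive hn hHconv hH0 hHnonneg hHzb
  refine ⟨max r (r * k / m) + 1, by positivity, fun p hp => ?_⟩
  by_contra hcon
  push_neg at hcon
  have h1 : r ≤ ‖p‖ := by
    have := le_max_left r (r * k / m); linarith
  have h2 := hco p h1
  have h3 : r * k / m < ‖p‖ := by
    have := le_max_right r (r * k / m); linarith
  have : k < m * (‖p‖ / r) := by
    rw [div_lt_iff₀ hm] at h3
    rw [← mul_div_assoc, lt_div_iff₀ hr]
    nlinarith
  linarith [h2, hp]

lemma H_hit_level (hn : 1 ≤ n) (hHconv : ConvexOn ℝ Set.univ H) (hH0 : H 0 = 0)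
    (hHnonneg : ∀ p, 0 ≤ H p) (hHzb : Bornology.IsBounded {p : Euc n | H p = 0})
    {k : ℝ} {p x : Euc n} (hx : x ≠ 0) (hp : H p ≤ k) :
    ∃ q : Euc n, H q = k ∧ ⟪p, x⟫ ≤ ⟪q, x⟫ := by
  obtain ⟨r, hr, m, hm, hco⟩ := H_coercive hn hHconv hH0 hHnonneg hHzb
  have hxn : 0 < ‖x‖ := norm_pos_iff.2 hx
  have hk0 : (0:ℝ) ≤ k := le_trans (hHnonneg p) hp
  -- choose T large
  obtain ⟨T, hT⟩ : ∃ T : ℝ, T = (r + ‖p‖ + r * (k + 1) / m) / ‖x‖ + 1 := ⟨_, rfl⟩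
  have hA : (0:ℝ) ≤ r + ‖p‖ + r * (k + 1) / m := by
    have : (0:ℝ) ≤ r * (k + 1) / m := div_nonneg (mul_nonneg hr.le (by linarith)) hm.le
    have := norm_nonneg p
    linarith
  have hTpos : 0 < T := by
    have : (0:ℝ) ≤ (r + ‖p‖ + r * (k + 1) / m) / ‖x‖ := div_nonneg hA hxn.le
    rw [hT]; linarith
  have hbig : k ≤ H (p + T • x) := by
    have hnorm : r + r * (k + 1) / m ≤ ‖p + T • x‖ := by
      have h1 : ‖T • x‖ ≤ ‖p + T • x‖ + ‖p‖ := by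
        calc ‖T • x‖ = ‖(p + T • x) - p‖ := by rw [add_sub_cancel_left]
          _ ≤ ‖p + T • x‖ + ‖p‖ := norm_sub_le _ _
      have h2 : ‖T • x‖ = T * ‖x‖ := by
        rw [norm_smul, Real.norm_eq_abs, abs_of_pos hTpos]
      have h3 : r + ‖p‖ + r * (k + 1) / m ≤ T * ‖x‖ := by
        rw [hT, add_mul, div_mul_cancel₀ _ (ne_of_gt hxn), one_mul]
        nlinarith
      linarith [h1, h2, h3]
    have hrle : r ≤ ‖p + T • x‖ := by
      have : 0 ≤ r * (k + 1) / m := by positivity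
      linarith
    have := hco _ hrle
    have hge : m * ((r + r * (k + 1) / m) / r) ≤ m * (‖p + T • x‖ / r) := by
      gcongr
    have heq : m * ((r + r * (k + 1) / m) / r) = m + (k + 1) := by
      field_simp
    linarith [heq ▸ hge, this]
  have hcont : ContinuousOn (fun t : ℝ => H (p + t • x)) (Icc 0 T) := by
    exact ((H_cont hHconv).comp (by continuity)).continuousOn
  have := intermediate_value_Icc hTpos.le hcont
  have hkmem : k ∈ Icc (H (p + (0:ℝ) • x)) (H (p + T • x)) := by
    constructor
    · simpa using hp
    · exact hbig
  obtain ⟨t₀, ht₀mem, ht₀⟩ := this hkmem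
  refine ⟨p + t₀ • x, ht₀, ?_⟩
  rw [inner_add_left, real_inner_smul_left, real_inner_self_eq_norm_sq]
  nlinarith [ht₀mem.1, sq_nonneg ‖x‖, mul_nonneg ht₀mem.1 (sq_nonneg ‖x‖)]

lemma H_level_nonempty (hn : 1 ≤ n) (hHconv : ConvexOn ℝ Set.univ H) (hH0 : H 0 = 0)
    (hHnonneg : ∀ p, 0 ≤ H p) (hHzb : Bornology.IsBounded {p : Euc n | H p = 0})
    {k : ℝ} (hk : 0 ≤ k) : ∃ p : Euc n, H p = k := by
  have hx : (EuclideanSpace.single (⟨0, hn⟩ : Fin n) (1:ℝ)) ≠ 0 := by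
    intro h
    have := congrArg norm h
    rw [EuclideanSpace.norm_single, norm_zero] at this
    norm_num at this
  obtain ⟨q, hq, _⟩ := H_hit_level (k := k) (p := 0) hn hHconv hH0 hHnonneg hHzb hx
    (le_of_eq_of_le hH0 hk)
  exact ⟨q, hq⟩

lemma coneSet_nonempty (hn : 1 ≤ n) (hHconv : ConvexOn ℝ Set.univ H) (hH0 : H 0 = 0)
    (hHnonneg : ∀ p, 0 ≤ H p) (hHzb : Bornology.IsBounded {p : Euc n | H p = 0})
    {k : ℝ} (hk : 0 ≤ k) (x : Euc n) :
    {r : ℝ | ∃ p, H p = k ∧ r = ⟪p, x⟫}.Nonempty := by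
  obtain ⟨p, hp⟩ := H_level_nonempty hn hHconv hH0 hHnonneg hHzb hk
  exact ⟨⟪p, x⟫, p, hp, rfl⟩

lemma coneSet_bddAbove (hn : 1 ≤ n) (hHconv : ConvexOn ℝ Set.univ H) (hH0 : H 0 = 0)
    (hHnonneg : ∀ p, 0 ≤ H p) (hHzb : Bornology.IsBounded {p : Euc n | H p = 0})
    (k : ℝ) (x : Euc n) :
    BddAbove {r : ℝ | ∃ p, H p = k ∧ r = ⟪p, x⟫} := by
  obtain ⟨R, hR, hRb⟩ := H_sublevel_bounded hn hHconv hH0 hHnonneg hHzb k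
  refine ⟨R * ‖x‖, fun r ⟨p, hp, hr⟩ => ?_⟩
  rw [hr]
  calc ⟪p, x⟫ ≤ ‖p‖ * ‖x‖ := real_inner_le_norm p x
    _ ≤ R * ‖x‖ := by
        have := hRb p hp.le
        gcongr

lemma inner_le_coneFn (hn : 1 ≤ n) (hHconv : ConvexOn ℝ Set.univ H) (hH0 : H 0 = 0)
    (hHnonneg : ∀ p, 0 ≤ H p) (hHzb : Bornology.IsBounded {p : Euc n | H p = 0})
    {k : ℝ} {p x : Euc n} (hp : H p ≤ k) :
    ⟪p, x⟫ ≤ coneFn H k x := by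
  have hk : (0:ℝ) ≤ k := le_trans (hHnonneg p) hp
  have hbdd := coneSet_bddAbove hn hHconv hH0 hHnonneg hHzb k x
  rcases eq_or_ne x 0 with rfl | hx
  · obtain ⟨q, hq⟩ := H_level_nonempty hn hHconv hH0 hHnonneg hHzb hk
    have : ⟪q, (0:Euc n)⟫ ≤ coneFn H k 0 := le_csSup hbdd ⟨q, hq, rfl⟩
    simpa using this
  · obtain ⟨q, hq, hqle⟩ := H_hit_level hn hHconv hH0 hHnonneg hHzb hx hp
    exact hqle.trans (le_csSup hbdd ⟨q, hq, rfl⟩)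

lemma coneFn_zero_arg (hn : 1 ≤ n) (hHconv : ConvexOn ℝ Set.univ H) (hH0 : H 0 = 0)
    (hHnonneg : ∀ p, 0 ≤ H p) (hHzb : Bornology.IsBounded {p : Euc n | H p = 0})
    {k : ℝ} (hk : 0 ≤ k) : coneFn H k (0 : Euc n) = 0 := by
  have hne := coneSet_nonempty hn hHconv hH0 hHnonneg hHzb hk (0 : Euc n)
  have hbdd := coneSet_bddAbove hn hHconv hH0 hHnonneg hHzb k (0 : Euc n)
  apply le_antisymm
  · apply csSup_le hne
    rintro r ⟨p, hp, rfl⟩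
    simp
  · obtain ⟨r, p, hp, hr⟩ := hne
    have : r ≤ coneFn H k 0 := le_csSup hbdd ⟨p, hp, hr⟩
    simp only [inner_zero_right] at hr
    rwa [← hr]

lemma coneFn_smul (hn : 1 ≤ n) (hHconv : ConvexOn ℝ Set.univ H) (hH0 : H 0 = 0)
    (hHnonneg : ∀ p, 0 ≤ H p) (hHzb : Bornology.IsBounded {p : Euc n | H p = 0})
    {k t : ℝ} (hk : 0 ≤ k) (ht : 0 < t) (x : Euc n) :
    coneFn H k (t • x) = t * coneFn H k x := by
  have hne := coneSet_nonempty hn hHconv hH0 hHnonneg hHzb hk x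
  have hbdd := coneSet_bddAbove hn hHconv hH0 hHnonneg hHzb k x
  have hne' := coneSet_nonempty hn hHconv hH0 hHnonneg hHzb hk (t • x)
  have hbdd' := coneSet_bddAbove hn hHconv hH0 hHnonneg hHzb k (t • x)
  apply le_antisymm
  · apply csSup_le hne'
    rintro r ⟨p, hp, rfl⟩
    rw [real_inner_smul_right]
    have : ⟪p, x⟫ ≤ coneFn H k x := le_csSup hbdd ⟨p, hp, rfl⟩
    exact mul_le_mul_of_nonneg_left this ht.le
  · rw [← le_div_iff₀' ht]
    apply csSup_le hne
    rintro r ⟨p, hp, rfl⟩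
    rw [le_div_iff₀' ht, ← real_inner_smul_right]
    exact le_csSup hbdd' ⟨p, hp, rfl⟩

lemma le_of_forall_inner_le_coneFn (hn : 1 ≤ n) (hHconv : ConvexOn ℝ Set.univ H) (hH0 : H 0 = 0)
    (hHnonneg : ∀ p, 0 ≤ H p) (hHzb : Bornology.IsBounded {p : Euc n | H p = 0})
    {k : ℝ} (hk : 0 ≤ k) {g : Euc n} (hg : ∀ e, ⟪g, e⟫ ≤ coneFn H k e) :
    H g ≤ k := by
  by_contra hcon
  push_neg at hcon
  have hS : Convex ℝ {p : Euc n | H p ≤ k} := by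
    have := hHconv.convex_le k
    simpa using this
  have hSclosed : IsClosed {p : Euc n | H p ≤ k} :=
    isClosed_le (H_cont hHconv) continuous_const
  have hgS : g ∉ {p : Euc n | H p ≤ k} := fun h => absurd h (by simpa using hcon.not_ge)
  obtain ⟨f, c, hfc, hcg⟩ := geometric_hahn_banach_closed_point hS hSclosed hgS
  set e := (InnerProductSpace.toDual ℝ (Euc n)).symm f with he
  have hfe : ∀ z, ⟪e, z⟫ = f z := fun z => InnerProductSpace.toDual_symm_apply
  have h1 : coneFn H k e ≤ c := by
    apply csSup_le (coneSet_nonempty hn hHconv hH0 hHnonneg hHzb hk e)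
    rintro r ⟨p, hp, rfl⟩
    rw [real_inner_comm, hfe]
    exact (hfc p (by simp [hp])).le
  have h2 : c < ⟪g, e⟫ := by
    rw [real_inner_comm, hfe]; exact hcg
  linarith [hg e]

lemma locLip_ball {u : Euc n → ℝ} {U : Set (Euc n)} (hu : LocLipOn u U) (hU : IsOpen U) :
    ∀ x ∈ U, ∃ r > (0:ℝ), ∃ L : NNReal, ball x r ⊆ U ∧ LipschitzOnWith L u (ball x r) := by
  intro x hx
  obtain ⟨K, s, hs, hlip⟩ := hu x hx
  rw [nhdsWithin_eq_nhds.2 (hU.mem_nhds hx)] at hs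
  have : s ∩ U ∈ 𝓝 x := Filter.inter_mem hs (hU.mem_nhds hx)
  obtain ⟨r, hr, hball⟩ := Metric.mem_nhds_iff.1 this
  exact ⟨r, hr, K, hball.trans inter_subset_right,
    hlip.mono (hball.trans inter_subset_left)⟩

lemma locLip_lipschitzOnWith {u : Euc n → ℝ} {U K : Set (Euc n)}
    (hu : LocLipOn u U) (hU : IsOpen U) (hK : IsCompact K) (hKc : Convex ℝ K)
    (hKU : K ⊆ U) : ∃ L : NNReal, LipschitzOnWith L u K := by
  rcases K.eq_empty_or_nonempty with rfl | hKne
  · exact ⟨1, by simp⟩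
  choose! r hr L hsub hlip using fun x hx => locLip_ball hu hU x (hKU hx)
  obtain ⟨t, htK, hcov⟩ := hK.elim_nhds_subcover (fun x => ball x (r x / 2))
    (fun x hx => ball_mem_nhds x (by have := hr x hx; linarith))
  have htne : t.Nonempty := by
    obtain ⟨x, hx⟩ := hKne
    obtain ⟨i, hi, _⟩ := mem_iUnion₂.1 (hcov hx)
    exact ⟨i, hi⟩
  set δ : ℝ := t.inf' htne (fun x => r x / 2) with hδdef
  have hδpos : 0 < δ := by
    rw [hδdef, Finset.lt_inf'_iff]
    intro i hi
    have := hr i (htK i hi)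
    linarith
  set L₀ : NNReal := t.sup L with hL₀
  have hLle : ∀ i ∈ t, (L i : ℝ) ≤ L₀ := fun i hi => by
    exact_mod_cast NNReal.coe_le_coe.2 (Finset.le_sup hi)
  have hlocal : ∀ a ∈ K, ∀ b ∈ K, dist a b < δ → dist (u a) (u b) ≤ (L₀ : ℝ) * dist a b := by
    intro a ha b hb hab
    obtain ⟨i, hi, hai⟩ := mem_iUnion₂.1 (hcov ha)
    have hδi : δ ≤ r i / 2 := Finset.inf'_le _ hi
    have hari : a ∈ ball i (r i) := by
      rw [mem_ball] at hai ⊢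
      linarith
    have hbri : b ∈ ball i (r i) := by
      rw [mem_ball] at hai ⊢
      have := dist_triangle b a i
      rw [dist_comm b a] at this
      linarith
    calc dist (u a) (u b) ≤ (L i : ℝ) * dist a b := (hlip i (htK i hi)).dist_le_mul a hari b hbri
      _ ≤ (L₀ : ℝ) * dist a b := by
          have := hLle i hi
          have := dist_nonneg (x := a) (y := b)
          nlinarith
  refine ⟨L₀, LipschitzOnWith.of_dist_le_mul fun a ha b hb => ?_⟩
  rcases eq_or_ne a b with rfl | hab
  · simp
  have hdpos : 0 < dist a b := dist_pos.2 hab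
  obtain ⟨N, hN⟩ := exists_nat_gt (dist a b / δ)
  have hNpos : 0 < (N:ℝ) := lt_trans (by positivity) hN
  have hstep_lt : dist a b / N < δ := by
    rw [div_lt_iff₀ hNpos]
    rw [div_lt_iff₀ hδpos] at hN
    linarith [mul_comm (N:ℝ) δ]
  set c : ℕ → Euc n := fun j => a + ((j:ℝ)/(N:ℝ)) • (b - a) with hc
  have hc0 : c 0 = a := by simp [hc]
  have hcN : c N = b := by
    simp only [hc, div_self (ne_of_gt hNpos), one_smul]
    abel
  have hcK : ∀ j ≤ N, c j ∈ K := by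
    intro j hj
    have h0 : (0:ℝ) ≤ (j:ℝ)/(N:ℝ) := by positivity
    have h1 : (j:ℝ)/(N:ℝ) ≤ 1 := by
      rw [div_le_one hNpos]
      exact_mod_cast hj
    have heq : c j = (1 - (j:ℝ)/(N:ℝ)) • a + ((j:ℝ)/(N:ℝ)) • b := by
      simp only [hc]
      rw [smul_sub, sub_smul, one_smul]
      abel
    rw [heq]
    exact hKc ha hb (by linarith) h0 (by ring)
  have hcdist : ∀ j : ℕ, dist (c j) (c (j+1)) = dist a b / N := by
    intro j
    have hsubeq : c (j+1) - c j = ((1:ℝ)/(N:ℝ)) • (b - a) := by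
      simp only [hc]
      have h9 : ((j:ℝ)+1)/(N:ℝ) - (j:ℝ)/(N:ℝ) = 1/(N:ℝ) := by ring
      push_cast
      rw [← h9, sub_smul]
      abel
    rw [dist_eq_norm', hsubeq, norm_smul, Real.norm_eq_abs,
      abs_of_pos (by positivity : (0:ℝ) < 1/(N:ℝ)), ← dist_eq_norm']
    ring
  have hind : ∀ j, j ≤ N → dist (u a) (u (c j)) ≤ (L₀:ℝ) * ((j:ℝ) * (dist a b / N)) := by
    intro j
    induction j with
    | zero => intro _; simp [hc0]
    | succ j ih =>
      intro hj
      have hj' : j ≤ N := Nat.le_of_succ_le hj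
      have h1 := ih hj'
      have h2 : dist (u (c j)) (u (c (j+1))) ≤ (L₀:ℝ) * (dist a b / N) := by
        have h3 := hlocal (c j) (hcK j hj') (c (j+1)) (hcK (j+1) hj)
          (by rw [hcdist]; exact hstep_lt)
        rw [hcdist j] at h3
        exact h3
      calc dist (u a) (u (c (j+1)))
          ≤ dist (u a) (u (c j)) + dist (u (c j)) (u (c (j+1))) := dist_triangle _ _ _
        _ ≤ (L₀:ℝ) * ((j:ℝ) * (dist a b / N)) + (L₀:ℝ) * (dist a b / N) := add_le_add h1 h2
        _ = (L₀:ℝ) * (((j:ℕ)+1:ℝ) * (dist a b / N)) := by ring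
        _ = (L₀:ℝ) * ((((j+1):ℕ):ℝ) * (dist a b / N)) := by push_cast; ring
  have hfin := hind N le_rfl
  rw [hcN] at hfin
  calc dist (u a) (u b) ≤ (L₀:ℝ) * ((N:ℝ) * (dist a b / N)) := hfin
    _ = (L₀:ℝ) * dist a b := by field_simp

lemma lip_increment_of_ae_deriv_le {g : ℝ → ℝ} {L : NNReal} {c : ℝ}
    (hg : LipschitzOnWith L g (Icc 0 1))
    (hae : ∀ᵐ t ∂(volume.restrict (Icc (0:ℝ) 1)),
      t ∈ Ico (0:ℝ) 1 → ∃ d ≤ c, HasDerivAt g d t) :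
    g 1 - g 0 ≤ c := by
  suffices hmain : ∀ ε > (0:ℝ), g 1 - g 0 ≤ c + 2 * ε by
    refine le_of_forall_pos_le_add fun ε hε => ?_
    have := hmain (ε/2) (by linarith)
    linarith
  intro ε hε
  set P : ℝ → Prop := fun t => t ∈ Ico (0:ℝ) 1 → ∃ d ≤ c, HasDerivAt g d t with hP
  have hnull : volume ({t | ¬ P t} ∩ Icc (0:ℝ) 1) = 0 := by
    have h := ae_iff.1 hae
    rwa [Measure.restrict_apply' measurableSet_Icc] at h
  set ε' : ℝ := ε / ((L:ℝ) + |c| + 1) with hε'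
  have hε'pos : 0 < ε' := by
    have : (0:ℝ) < (L:ℝ) + |c| + 1 := by positivity
    positivity
  obtain ⟨O, hOsup, hOopen, hOvol⟩ :=
    Set.exists_isOpen_lt_of_lt ({t | ¬ P t} ∩ Icc (0:ℝ) 1) (ENNReal.ofReal ε')
      (by rw [hnull]; exact ENNReal.ofReal_pos.2 hε'pos)
  have hOfin : volume O ≠ ⊤ := ne_top_of_lt (hOvol.trans_le le_top)
  set m : ℝ → ℝ := fun t => (volume (O ∩ Ioc 0 t)).toReal with hm
  have hmfin : ∀ t, volume (O ∩ Ioc 0 t) ≠ ⊤ :=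
    fun t => ne_top_of_le_ne_top hOfin (measure_mono inter_subset_left)
  have hm0 : m 0 = 0 := by simp [hm]
  have hmono : ∀ s t : ℝ, s ≤ t → m s ≤ m t := by
    intro s t hst
    exact ENNReal.toReal_mono (hmfin t)
      (measure_mono (inter_subset_inter_right _ (Ioc_subset_Ioc_right hst)))
  have hlipm : ∀ s t : ℝ, s ≤ t → m t - m s ≤ t - s := by
    intro s t hst
    have hsub : O ∩ Ioc 0 t ⊆ (O ∩ Ioc 0 s) ∪ Ioc s t := by
      rintro x ⟨hxO, hx0, hxt⟩
      rcases le_or_gt x s with h | h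
      · exact Or.inl ⟨hxO, hx0, h⟩
      · exact Or.inr ⟨h, hxt⟩
    have h1 : volume (O ∩ Ioc 0 t) ≤ volume (O ∩ Ioc 0 s) + volume (Ioc s t) :=
      (measure_mono hsub).trans (measure_union_le _ _)
    rw [Real.volume_Ioc] at h1
    have h2 := ENNReal.toReal_mono (by
      refine ENNReal.add_ne_top.2 ⟨hmfin s, ?_⟩
      exact ENNReal.ofReal_ne_top) h1
    rw [ENNReal.toReal_add (hmfin s) ENNReal.ofReal_ne_top,
      ENNReal.toReal_ofReal (by linarith)] at h2
    simp only [hm] at *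
    linarith
  have hgain : ∀ s t : ℝ, 0 ≤ s → s ≤ t → Ioc s t ⊆ O → t - s ≤ m t - m s := by
    intro s t hs hst hsubO
    have hsub : (O ∩ Ioc 0 s) ∪ Ioc s t ⊆ O ∩ Ioc 0 t := by
      rintro x (⟨hxO, hx0, hxs⟩ | ⟨hxs, hxt⟩)
      · exact ⟨hxO, hx0, hxs.trans hst⟩
      · exact ⟨hsubO ⟨hxs, hxt⟩, lt_of_le_of_lt hs hxs, hxt⟩
    have hdisj : Disjoint (O ∩ Ioc 0 s) (Ioc s t) := by
      refine Set.disjoint_left.2 ?_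
      rintro x ⟨_, _, hxs⟩ ⟨hxs', _⟩
      exact absurd hxs (not_le.2 hxs')
    have h1 : volume (O ∩ Ioc 0 s) + volume (Ioc s t) ≤ volume (O ∩ Ioc 0 t) := by
      rw [← measure_union hdisj measurableSet_Ioc]
      exact measure_mono hsub
    rw [Real.volume_Ioc] at h1
    have h2 := ENNReal.toReal_mono (hmfin t) h1
    rw [ENNReal.toReal_add (hmfin s) ENNReal.ofReal_ne_top,
      ENNReal.toReal_ofReal (by linarith)] at h2
    simp only [hm] at *
    linarith
  have hmcont : Continuous m := by
    refine (LipschitzWith.of_dist_le_mul (K := 1) fun s t => ?_).continuous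
    rw [NNReal.coe_one, one_mul, Real.dist_eq, Real.dist_eq]
    rcases le_total s t with h | h
    · rw [abs_of_nonpos (by linarith [hmono s t h]), abs_of_nonpos (by linarith)]
      linarith [hlipm s t h]
    · rw [abs_of_nonneg (by linarith [hmono t s h]), abs_of_nonneg (by linarith)]
      linarith [hlipm t s h]
  set φ : ℝ → ℝ := fun t => g t - g 0 - (c + ε) * t - ((L:ℝ) + |c|) * m t with hφ
  have hφcont : ContinuousOn φ (Icc 0 1) := by
    apply ContinuousOn.sub
    apply ContinuousOn.sub
    apply ContinuousOn.sub hg.continuousOn continuousOn_const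
    · exact (continuous_const.mul continuous_id).continuousOn
    · exact (continuous_const.mul hmcont).continuousOn
  set S : Set ℝ := Icc 0 1 ∩ φ ⁻¹' Iic 0 with hS
  have hScl : IsClosed S := hφcont.preimage_isClosed_of_isClosed isClosed_Icc isClosed_Iic
  have hScpt : IsCompact S := isCompact_Icc.of_isClosed_subset hScl inter_subset_left
  have h0S : (0:ℝ) ∈ S := by
    constructor
    · exact ⟨le_refl 0, by norm_num⟩
    · simp [hφ, hm0]
  set τ : ℝ := sSup S with hτ
  have hτS : τ ∈ S := hScpt.sSup_mem ⟨0, h0S⟩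
  have hτ0 : 0 ≤ τ := hτS.1.1
  have hτ1 : τ ≤ 1 := hτS.1.2
  have hτtop : ∀ t ∈ S, t ≤ τ := fun t ht => le_csSup hScpt.bddAbove ht
  have hτeq : τ = 1 := by
    by_contra hne
    have hτlt : τ < 1 := lt_of_le_of_ne hτ1 hne
    rcases Classical.em (τ ∈ O) with hτO | hτO
    · -- inside the open exceptional set
      obtain ⟨η, hη, hball⟩ := Metric.isOpen_iff.1 hOopen τ hτO
      set t' : ℝ := min 1 (τ + η/2) with ht'
      have hτt' : τ < t' := lt_min hτlt (by linarith)
      have ht'1 : t' ≤ 1 := min_le_left _ _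
      have hIocO : Ioc τ t' ⊆ O := by
        rintro x ⟨hx1, hx2⟩
        apply hball
        rw [mem_ball, Real.dist_eq, abs_of_pos (by linarith)]
        have := min_le_right (1:ℝ) (τ + η/2)
        have := hx2.trans this
        linarith
      have hgstep : g t' - g τ ≤ (L:ℝ) * (t' - τ) := by
        have := hg.dist_le_mul t' ⟨by linarith, ht'1⟩ τ ⟨hτ0, hτ1⟩
        rw [Real.dist_eq, Real.dist_eq, abs_of_pos (by linarith : (0:ℝ) < t' - τ)] at this
        calc g t' - g τ ≤ |g t' - g τ| := le_abs_self _
          _ ≤ (L:ℝ) * (t' - τ) := this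
      have hmstep : t' - τ ≤ m t' - m τ := hgain τ t' hτ0 hτt'.le hIocO
      have hφt' : φ t' ≤ 0 := by
        have hφτ : φ τ ≤ 0 := hτS.2
        have habs : -c ≤ |c| := neg_le_abs c
        have hL0 : (0:ℝ) ≤ (L:ℝ) := NNReal.coe_nonneg L
        have hprod : ((L:ℝ)+|c|) * (t'-τ) ≤ ((L:ℝ)+|c|) * (m t' - m τ) :=
          mul_le_mul_of_nonneg_left hmstep (by positivity)
        have h1 : ((L:ℝ))*(t'-τ) - (c+ε)*(t'-τ) - ((L:ℝ)+|c|)*(t'-τ)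
            = (-c - ε - |c|)*(t'-τ) := by ring
        have h2 : (-c - ε - |c|)*(t'-τ) ≤ 0 :=
          mul_nonpos_of_nonpos_of_nonneg (by linarith) (by linarith)
        simp only [hφ] at hφτ ⊢
        nlinarith [hprod, hgstep, h1, h2]
      exact absurd (hτtop t' ⟨⟨by linarith, ht'1⟩, hφt'⟩) (not_le.2 hτt')
    · -- derivative point
      have hPτ : P τ := by
        by_contra hnP
        exact hτO (hOsup ⟨hnP, hτ0, hτ1⟩)
      obtain ⟨d, hd, hder⟩ := hPτ ⟨hτ0, hτlt⟩
      have htends : Tendsto (slope g τ) (𝓝[>] τ) (𝓝 d) :=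
        ((hasDerivAt_iff_tendsto_slope.1 hder).mono_left
          (nhdsWithin_mono τ (fun x hx => ne_of_gt hx)))
      have h1 : ∀ᶠ t' in 𝓝[>] τ, slope g τ t' < d + ε :=
        htends.eventually (gt_mem_nhds (by linarith))
      have h2 : ∀ᶠ t' in 𝓝[>] τ, t' ∈ Ioo τ 1 :=
        Ioo_mem_nhdsGT_of_mem ⟨le_refl τ, hτlt⟩
      obtain ⟨t', hslope, ht'mem⟩ := (h1.and h2).exists
      have hτt' : τ < t' := ht'mem.1
      have hgstep : g t' - g τ ≤ (c + ε) * (t' - τ) := by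
        rw [slope_def_field] at hslope
        have h3 : (g t' - g τ) / (t' - τ) < d + ε := hslope
        have h4 : (g t' - g τ) / (t' - τ) ≤ c + ε := by linarith
        rw [div_le_iff₀ (by linarith : (0:ℝ) < t' - τ)] at h4
        linarith [h4]
      have hφt' : φ t' ≤ 0 := by
        have hφτ : φ τ ≤ 0 := hτS.2
        have hL0 : (0:ℝ) ≤ (L:ℝ) := NNReal.coe_nonneg L
        have habs : (0:ℝ) ≤ |c| := abs_nonneg c
        have hmst : m τ ≤ m t' := hmono _ _ hτt'.le
        have hprod : (0:ℝ) ≤ ((L:ℝ)+|c|) * (m t' - m τ) :=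
          mul_nonneg (by positivity) (by linarith)
        simp only [hφ] at hφτ ⊢
        nlinarith [hprod, hgstep]
      exact absurd (hτtop t' ⟨⟨by linarith, ht'mem.2.le⟩, hφt'⟩) (not_le.2 hτt')
  -- conclude
  have hφ1 : φ 1 ≤ 0 := hτeq ▸ hτS.2
  have hm1 : m 1 ≤ ε' := by
    have h1 : volume (O ∩ Ioc 0 1) ≤ volume O := measure_mono inter_subset_left
    have h2 : volume (O ∩ Ioc 0 1) < ENNReal.ofReal ε' := lt_of_le_of_lt h1 hOvol
    exact le_of_lt (ENNReal.toReal_lt_of_lt_ofReal h2)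
  have hfinal : ((L:ℝ) + |c|) * m 1 ≤ ε := by
    have hm1nn : 0 ≤ m 1 := ENNReal.toReal_nonneg
    have hL0 : (0:ℝ) ≤ (L:ℝ) := NNReal.coe_nonneg L
    have habs : (0:ℝ) ≤ |c| := abs_nonneg c
    calc ((L:ℝ) + |c|) * m 1 ≤ ((L:ℝ) + |c| + 1) * ε' := by nlinarith
      _ = ε := by
          rw [hε']
          field_simp
  simp only [hφ] at hφ1
  linarith

lemma ae_differentiable_on_open {u : Euc n → ℝ} {U : Set (Euc n)}
    (hu : LocLipOn u U) (hU : IsOpen U) :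
    ∀ᵐ z ∂(volume : Measure (Euc n)), z ∈ U → DifferentiableAt ℝ u z := by
  rcases U.eq_empty_or_nonempty with rfl | hUne
  · filter_upwards with z hz
    exact absurd hz (notMem_empty z)
  choose! r hr L hsub hlip using locLip_ball hu hU
  obtain ⟨T, hTc, hTeq⟩ := TopologicalSpace.isOpen_iUnion_countable
    (fun i : U => ball (i : Euc n) (r i)) (fun i => isOpen_ball)
  have hcover : U ⊆ ⋃ i ∈ T, ball (i : Euc n) (r i) := by
    intro z hz
    rw [hTeq]
    exact mem_iUnion.2 ⟨⟨z, hz⟩, mem_ball_self (hr z hz)⟩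
  have hae : ∀ i : U, ∀ᵐ z ∂(volume : Measure (Euc n)),
      z ∈ ball (i : Euc n) (r i) → DifferentiableAt ℝ u z := by
    intro i
    obtain ⟨g, hgLip, hEq⟩ := (hlip i i.2).extend_real
    filter_upwards [hgLip.ae_differentiableAt] with z hz hzball
    have hev : u =ᶠ[nhds z] g :=
      Filter.eventuallyEq_of_mem (isOpen_ball.mem_nhds hzball) hEq
    exact hz.congr_of_eventuallyEq hev
  have hae' : ∀ᵐ z ∂(volume : Measure (Euc n)), ∀ i ∈ T,
      z ∈ ball (i : Euc n) (r i) → DifferentiableAt ℝ u z :=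
    (ae_ball_iff hTc).2 (fun i _ => hae i)
  filter_upwards [hae'] with z hz hzU
  obtain ⟨i, hi, hzi⟩ := mem_iUnion₂.1 (hcover hzU)
  exact hz i hi hzi

lemma ae_shift_avoids_null {N' : Set (Euc n)} (hN'm : MeasurableSet N') (hN'0 : volume N' = 0)
    (y v : Euc n) :
    ∀ᵐ w ∂(volume : Measure (Euc n)),
      ∀ᵐ t ∂(volume.restrict (Icc (0:ℝ) 1)), y + w + t • v ∉ N' := by
  set φ : Euc n × ℝ → Euc n := fun q => y + q.1 + q.2 • v with hφdef
  have hφcont : Continuous φ := by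
    exact ((continuous_const.add continuous_fst).add (continuous_snd.smul continuous_const))
  set f : Euc n × ℝ → ℝ≥0∞ := fun q => N'.indicator (fun _ => (1:ℝ≥0∞)) (φ q) with hfdef
  have hfm : Measurable f := (measurable_const.indicator hN'm).comp hφcont.measurable
  have hinner : ∀ t : ℝ, ∫⁻ w, f (w, t) ∂(volume : Measure (Euc n)) = 0 := by
    intro t
    have heqfun : (fun w : Euc n => f (w, t))
        = ((fun w : Euc n => (y + t • v) + w) ⁻¹' N').indicator (1 : Euc n → ℝ≥0∞) := by
      funext w
      have hpt : φ (w, t) = (y + t • v) + w := by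
        simp only [hφdef]
        abel
      simp only [hfdef, hpt]
      by_cases hmem : (y + t • v + w) ∈ N'
      · rw [Set.indicator_of_mem hmem, Set.indicator_of_mem (Set.mem_preimage.2 hmem)]
        rfl
      · rw [Set.indicator_of_notMem hmem,
          Set.indicator_of_notMem (fun hc => hmem (Set.mem_preimage.1 hc))]
    rw [heqfun, lintegral_indicator_one (hN'm.preimage (measurable_const_add _)),
      measure_preimage_add, hN'0]
  have hswap : ∫⁻ w, ∫⁻ t in Icc (0:ℝ) 1, f (w, t) ∂volume ∂(volume : Measure (Euc n)) = 0 := by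
    rw [lintegral_lintegral_swap (hfm.aemeasurable)]
    have : ∀ t : ℝ, ∫⁻ w, f (w, t) ∂(volume : Measure (Euc n)) = 0 := hinner
    simp only [this, lintegral_zero]
  have hm_outer : Measurable fun w => ∫⁻ t in Icc (0:ℝ) 1, f (w, t) ∂volume :=
    hfm.lintegral_prod_right'
  have hae_w := (lintegral_eq_zero_iff hm_outer).1 hswap
  filter_upwards [hae_w] with w hw
  have hm_t : Measurable fun t => f (w, t) := hfm.comp measurable_prodMk_left
  have hw' : ∫⁻ t in Icc (0:ℝ) 1, f (w, t) ∂volume = 0 := hw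
  have := (lintegral_eq_zero_iff hm_t).1 hw'
  filter_upwards [this] with t ht
  intro hmem
  have : f (w, t) = 1 := by
    simp only [hfdef, hφdef]
    exact Set.indicator_of_mem hmem _
  rw [ht] at this
  exact one_ne_zero this.symm


end Aux

/-- For `u ∈ Lip_loc(U)`, `H(Du) ≤ k` a.e. in `U` iff `u(x) - u(y) ≤ C_k(x-y)` whenever
the segment `[x,y]` lies in `U`. -/
theorem gradient_bound_iff_cone_estimate {n : ℕ} (hn : 1 ≤ n) (H : Euc n → ℝ)
    (hHconv : ConvexOn ℝ Set.univ H) (hH0 : H 0 = 0) (hHnonneg : ∀ p, 0 ≤ H p)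
    (hHzb : Bornology.IsBounded {p : Euc n | H p = 0})
    (hHzi : interior {p : Euc n | H p = 0} = ∅)
    (U : Set (Euc n)) (hU : IsOpen U) (u : Euc n → ℝ)
    (hu : LocLipOn u U) (k : ℝ) (hk : 0 ≤ k) :
    (∀ᵐ x ∂(volume.restrict U), H (gradient u x) ≤ k) ↔
      ∀ x y : Euc n, segment ℝ x y ⊆ U → u x - u y ≤ coneFn H k (x - y) := by
  constructor
  · -- forward direction
    intro hae x y hseg
    rcases eq_or_ne x y with rfl | hxy
    · rw [sub_self, sub_self, coneFn_zero_arg hn hHconv hH0 hHnonneg hHzb hk]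
    set v : Euc n := x - y with hv
    have hsegcpt : IsCompact (segment ℝ x y) := by
      rw [segment_eq_image' (𝕜 := ℝ) x y]
      exact isCompact_Icc.image (by continuity)
    obtain ⟨δ, hδ, hKU⟩ := hsegcpt.exists_cthickening_subset_open hU hseg
    set K : Set (Euc n) := cthickening δ (segment ℝ x y) with hKdef
    have hKcpt : IsCompact K := hsegcpt.cthickening
    have hKconv : Convex ℝ K := (convex_segment x y).cthickening δ
    obtain ⟨L, hLip⟩ := locLip_lipschitzOnWith hu hU hKcpt hKconv hKU
    have hmemseg : ∀ t ∈ Icc (0:ℝ) 1, y + t • v ∈ segment ℝ x y := by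
      intro t ht
      rw [segment_symm, segment_eq_image' (𝕜 := ℝ) y x]
      exact ⟨t, ht, rfl⟩
    -- null set of bad points
    have hdiffae := ae_differentiable_on_open hu hU
    have hboundae : ∀ᵐ z ∂(volume : Measure (Euc n)), z ∈ U → H (gradient u z) ≤ k :=
      ae_imp_of_ae_restrict hae
    set N : Set (Euc n) :=
      {z | z ∈ U ∧ ¬(DifferentiableAt ℝ u z ∧ H (gradient u z) ≤ k)} with hNdef
    have hNnull : volume N = 0 := by
      rw [measure_eq_zero_iff_ae_notMem]
      filter_upwards [hdiffae, hboundae] with z h1 h2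
      rintro ⟨hzU, hbad⟩
      exact hbad ⟨h1 hzU, h2 hzU⟩
    set N' : Set (Euc n) := toMeasurable volume N with hN'def
    have hsubN' : N ⊆ N' := subset_toMeasurable _ _
    have hN'm : MeasurableSet N' := measurableSet_toMeasurable _ _
    have hN'0 : volume N' = 0 := by rw [hN'def, measure_toMeasurable]; exact hNnull
    have hkey := ae_shift_avoids_null hN'm hN'0 y v
    -- choose good shifts
    have hgood : ∀ j : ℕ, ∃ wj : Euc n, ‖wj‖ < min δ (1/((j:ℝ)+1)) ∧
        (∀ᵐ t ∂volume.restrict (Icc (0:ℝ) 1), y + wj + t • v ∉ N') := by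
      intro j
      by_contra hcon
      push_neg at hcon
      have hposmin : 0 < min δ (1/((j:ℝ)+1)) := lt_min hδ (by positivity)
      have hnullG : volume {w : Euc n |
          ¬ (∀ᵐ t ∂volume.restrict (Icc (0:ℝ) 1), y + w + t • v ∉ N')} = 0 := ae_iff.1 hkey
      have hbsub : ball (0:Euc n) (min δ (1/((j:ℝ)+1))) ⊆ {w : Euc n |
          ¬ (∀ᵐ t ∂volume.restrict (Icc (0:ℝ) 1), y + w + t • v ∉ N')} := by
        intro w hwb
        rw [mem_ball_zero_iff] at hwb
        exact fun hcontra => (hcon w hwb) hcontra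
      have h1 : (volume : Measure (Euc n)) (ball (0:Euc n) (min δ (1/((j:ℝ)+1)))) ≤
          (volume : Measure (Euc n)) {w : Euc n |
          ¬ (∀ᵐ t ∂volume.restrict (Icc (0:ℝ) 1), y + w + t • v ∉ N')} := measure_mono hbsub
      rw [hnullG] at h1
      exact absurd (le_antisymm h1 (by simp))
        (ne_of_gt (measure_ball_pos volume (0:Euc n) hposmin))
    choose w hwlt hwgood using hgood
    -- membership of shifted segments in K
    have hmemK : ∀ (j : ℕ), ∀ t ∈ Icc (0:ℝ) 1, y + w j + t • v ∈ K := by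
      intro j t ht
      apply mem_cthickening_of_dist_le (y + w j + t • v) (y + t • v) δ _ (hmemseg t ht)
      rw [dist_eq_norm]
      have heq : y + w j + t • v - (y + t • v) = w j := by abel
      rw [heq]
      exact ((hwlt j).trans_le (min_le_left _ _)).le
    -- estimate for each shift
    have hkeyest : ∀ j : ℕ, u (x + w j) - u (y + w j) ≤ coneFn H k v := by
      intro j
      set g : ℝ → ℝ := fun t => u (y + w j + t • v) with hgdef
      have hline : LipschitzWith ‖v‖₊ (fun t : ℝ => y + w j + t • v) := by
        apply LipschitzWith.of_dist_le_mul
        intro s t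
        rw [dist_eq_norm]
        have heq : y + w j + s • v - (y + w j + t • v) = (s - t) • v := by
          rw [sub_smul]; abel
        rw [heq, norm_smul, Real.dist_eq, coe_nnnorm, Real.norm_eq_abs, mul_comm]
      have hgLip : LipschitzOnWith (L * ‖v‖₊) g (Icc 0 1) :=
        hLip.comp hline.lipschitzOnWith (fun t ht => hmemK j t ht)
      have haet : ∀ᵐ t ∂volume.restrict (Icc (0:ℝ) 1),
          t ∈ Ico (0:ℝ) 1 → ∃ d ≤ coneFn H k v, HasDerivAt g d t := by
        filter_upwards [hwgood j, ae_restrict_mem measurableSet_Icc] with t htgood htIcc htIco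
        have hzU : y + w j + t • v ∈ U := hKU (hmemK j t htIcc)
        have hzgood : DifferentiableAt ℝ u (y + w j + t • v) ∧
            H (gradient u (y + w j + t • v)) ≤ k := by
          by_contra hc
          exact htgood (hsubN' ⟨hzU, hc⟩)
        refine ⟨fderiv ℝ u (y + w j + t • v) v, ?_, ?_⟩
        · have heq : fderiv ℝ u (y + w j + t • v) v
              = ⟪gradient u (y + w j + t • v), v⟫ := by
            rw [gradient]
            exact (InnerProductSpace.toDual_symm_apply).symm
          rw [heq]
          exact inner_le_coneFn hn hHconv hH0 hHnonneg hHzb hzgood.2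
        · have hlineder : HasDerivAt (fun s : ℝ => y + w j + s • v) v t := by
            simpa using ((hasDerivAt_id t).smul_const v).const_add (y + w j)
          exact hzgood.1.hasFDerivAt.comp_hasDerivAt t hlineder
      have hF3 := lip_increment_of_ae_deriv_le hgLip haet
      have h1 : y + w j + (1:ℝ) • v = x + w j := by
        rw [one_smul, hv]; abel
      have h0 : y + w j + (0:ℝ) • v = y + w j := by
        rw [zero_smul, add_zero]
      simp only [hgdef, h1, h0] at hF3
      exact hF3
    -- pass to the limit
    have hwlim : Tendsto (fun j : ℕ => w j) atTop (𝓝 (0:Euc n)) := by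
      apply squeeze_zero_norm (fun j => ((hwlt j).trans_le (min_le_right _ _)).le)
      exact tendsto_one_div_add_atTop_nhds_zero_nat
    have hxK : x ∈ K := self_subset_cthickening _ (left_mem_segment ℝ x y)
    have hyK : y ∈ K := self_subset_cthickening _ (right_mem_segment ℝ x y)
    have hmemxK : ∀ j : ℕ, x + w j ∈ K := by
      intro j
      apply mem_cthickening_of_dist_le (x + w j) x δ _ (left_mem_segment ℝ x y)
      rw [dist_eq_norm]
      have heq : x + w j - x = w j := by abel
      rw [heq]
      exact ((hwlt j).trans_le (min_le_left _ _)).le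
    have hmemyK : ∀ j : ℕ, y + w j ∈ K := by
      intro j
      apply mem_cthickening_of_dist_le (y + w j) y δ _ (right_mem_segment ℝ x y)
      rw [dist_eq_norm]
      have heq : y + w j - y = w j := by abel
      rw [heq]
      exact ((hwlt j).trans_le (min_le_left _ _)).le
    have hxlim : Tendsto (fun j : ℕ => u (x + w j)) atTop (𝓝 (u x)) := by
      have hcx : ContinuousWithinAt u K x := hLip.continuousOn.continuousWithinAt hxK
      apply hcx.tendsto.comp
      rw [tendsto_nhdsWithin_iff]
      constructor
      · have := tendsto_const_nhds (x := x) (f := atTop (α := ℕ)) |>.add hwlim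
        simpa using this
      · exact Filter.Eventually.of_forall hmemxK
    have hylim : Tendsto (fun j : ℕ => u (y + w j)) atTop (𝓝 (u y)) := by
      have hcy : ContinuousWithinAt u K y := hLip.continuousOn.continuousWithinAt hyK
      apply hcy.tendsto.comp
      rw [tendsto_nhdsWithin_iff]
      constructor
      · have := tendsto_const_nhds (x := y) (f := atTop (α := ℕ)) |>.add hwlim
        simpa using this
      · exact Filter.Eventually.of_forall hmemyK
    exact le_of_tendsto (hxlim.sub hylim) (Filter.Eventually.of_forall hkeyest)
  · -- reverse direction
    intro hcone
    refine (ae_restrict_mem hU.measurableSet).mono fun x hx => ?_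
    by_cases hdiff : DifferentiableAt ℝ u x
    · refine le_of_forall_inner_le_coneFn hn hHconv hH0 hHnonneg hHzb hk fun e => ?_
      rcases eq_or_ne e 0 with rfl | he
      · rw [coneFn_zero_arg hn hHconv hH0 hHnonneg hHzb hk, inner_zero_right]
      obtain ⟨ρ, hρ, hball⟩ := Metric.isOpen_iff.1 hU x hx
      have hDer : HasDerivAt (fun t : ℝ => u (x + t • e)) (fderiv ℝ u x e) 0 := by
        have hlineder : HasDerivAt (fun t : ℝ => x + t • e) e 0 := by
          simpa using ((hasDerivAt_id (0:ℝ)).smul_const e).const_add x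
        have h0 : x + (0:ℝ) • e = x := by rw [zero_smul, add_zero]
        have hF : HasFDerivAt u (fderiv ℝ u x) (x + (0:ℝ) • e) := by
          rw [h0]; exact hdiff.hasFDerivAt
        exact hF.comp_hasDerivAt 0 hlineder
      have htends : Tendsto (slope (fun t : ℝ => u (x + t • e)) 0) (𝓝[>] (0:ℝ))
          (𝓝 (fderiv ℝ u x e)) :=
        (hasDerivAt_iff_tendsto_slope.1 hDer).mono_left
          (nhdsWithin_mono _ (fun s hs => ne_of_gt hs))
      have hev : ∀ᶠ t in 𝓝[>] (0:ℝ), slope (fun t : ℝ => u (x + t • e)) 0 t ≤ coneFn H k e := by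
        filter_upwards [Ioo_mem_nhdsGT_of_mem
          (⟨le_refl (0:ℝ), by positivity⟩ : (0:ℝ) ∈ Ico 0 (ρ/(‖e‖+1)))] with t ht
        have htpos : 0 < t := ht.1
        have hmemb : x + t • e ∈ ball x ρ := by
          rw [mem_ball, dist_eq_norm]
          have heq : x + t • e - x = t • e := by abel
          rw [heq, norm_smul, Real.norm_eq_abs, abs_of_pos htpos]
          have h2 : t < ρ/(‖e‖+1) := ht.2
          have h3 : (0:ℝ) < ‖e‖ + 1 := by positivity
          rw [lt_div_iff₀ h3] at h2
          nlinarith [norm_nonneg e]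
        have hsegsub : segment ℝ (x + t • e) x ⊆ U := by
          refine Subset.trans ?_ hball
          exact (convex_ball x ρ).segment_subset hmemb (mem_ball_self hρ)
        have hc := hcone (x + t • e) x hsegsub
        have heq : x + t • e - x = t • e := by abel
        rw [heq, coneFn_smul hn hHconv hH0 hHnonneg hHzb hk htpos] at hc
        rw [slope_def_field]
        simp only [zero_smul, add_zero, sub_zero]
        rw [div_le_iff₀ htpos]
        linarith [hc]
      have hder_le : fderiv ℝ u x e ≤ coneFn H k e := le_of_tendsto htends hev
      have heq : ⟪gradient u x, e⟫ = fderiv ℝ u x e := by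
        rw [gradient]
        exact InnerProductSpace.toDual_symm_apply
      rw [heq]
      exact hder_le
    · rw [gradient, fderiv_zero_of_not_differentiableAt hdiff, map_zero, hH0]
      exact hk
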